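/- Suppose that for every integer d ≥ 3 the set 𝓔_d is a finite subset of ℤ_{>0} × ℤ_{>0}, that 𝓔_d = ∅ for every odd d, that every 𝓔_d satisfies conditions (C1) and (C2), and that (1/d)·log(#𝓔_d + 1) → 0 as d → ∞. Then: (i) for every m ∈ ℤ∖{0,1} and every integer d ≥ 4, the set 𝓖_{≥d}(m) is finite; (ii) for every integer d ≥ 4 and every ε > 0 there exists a constant K (depending on d, ε and the family (𝓔_d)) such that #𝓖_{≥d}(m) ≤ K·|m|^{(1/d)+ε} for every integer m with |m| ≥ 2. -/

import Mathlib

/-- `q` is the `d`-th power of a rational number. -/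
def IsDPow (d : ℕ) (q : ℚ) : Prop := ∃ r : ℚ, q = r ^ d

/-- Condition (C1): for all distinct pairs `(a,b) ≠ (a',b')` in `E`, at least one of the
ratios `a/a'` and `b/b'` is not the `d`-th power of a rational number. -/
def CondC1 (d : ℕ) (E : Finset (ℤ × ℤ)) : Prop :=
  ∀ p ∈ E, ∀ p' ∈ E, p ≠ p' →
    ¬ IsDPow d ((p.1 : ℚ) / (p'.1 : ℚ)) ∨ ¬ IsDPow d ((p.2 : ℚ) / (p'.2 : ℚ))

/-- Condition (C2): for all distinct pairs `(a,b) ≠ (a',b')` in `E`, at least one of the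
ratios `a/b'` and `b/a'` is not the `d`-th power of a rational number. -/
def CondC2 (d : ℕ) (E : Finset (ℤ × ℤ)) : Prop :=
  ∀ p ∈ E, ∀ p' ∈ E, p ≠ p' →
    ¬ IsDPow d ((p.1 : ℚ) / (p'.2 : ℚ)) ∨ ¬ IsDPow d ((p.2 : ℚ) / (p'.1 : ℚ))

/-- The set `𝓖_{≥ d}(m)` of quintuples `(d', a, b, x, y)` with `d' ≥ d`, `(a,b) ∈ 𝓔_{d'}`,
`max(|x|,|y|) ≥ 2` and `m = a x^{d'} + b y^{d'}`. -/
def GSet (E : ℕ → Finset (ℤ × ℤ)) (d : ℕ) (m : ℤ) : Set (ℕ × ℤ × ℤ × ℤ × ℤ) :=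
  {q | d ≤ q.1 ∧ (q.2.1, q.2.2.1) ∈ E q.1 ∧
    2 ≤ max |q.2.2.2.1| |q.2.2.2.2| ∧
    m = q.2.1 * q.2.2.2.1 ^ q.1 + q.2.2.1 * q.2.2.2.2 ^ q.1}

private lemma gset_facts (E : ℕ → Finset (ℤ × ℤ))
    (hpos : ∀ d : ℕ, 3 ≤ d → ∀ p ∈ E d, 0 < p.1 ∧ 0 < p.2)
    (hodd : ∀ d : ℕ, Odd d → E d = ∅)
    {d : ℕ} (hd : 4 ≤ d) {m : ℤ} {n : ℕ} {a b x y : ℤ}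
    (hq : (n, a, b, x, y) ∈ GSet E d m) :
    d ≤ n ∧ Even n ∧ 0 < a ∧ 0 < b ∧ (2:ℤ) ^ n ≤ m ∧
      |x| ^ d ≤ m ∧ |y| ^ d ≤ m ∧ |x| ≤ m ∧ |y| ≤ m := by
  obtain ⟨hdn, hab, hxy, hm⟩ := hq
  have hn3 : 3 ≤ n := by omega
  have heven : Even n := by
    by_contra h
    rw [Nat.not_even_iff_odd] at h
    rw [hodd n h] at hab
    exact absurd hab (Finset.notMem_empty _)
  have ha : 0 < a := (hpos n hn3 (a, b) hab).1
  have hb : 0 < b := (hpos n hn3 (a, b) hab).2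
  have hxn : (0:ℤ) ≤ x ^ n := heven.pow_nonneg x
  have hyn : (0:ℤ) ≤ y ^ n := heven.pow_nonneg y
  have haxn : x ^ n ≤ a * x ^ n := le_mul_of_one_le_left hxn ha
  have hbyn : y ^ n ≤ b * y ^ n := le_mul_of_one_le_left hyn hb
  have hax0 : (0:ℤ) ≤ a * x ^ n := mul_nonneg ha.le hxn
  have hby0 : (0:ℤ) ≤ b * y ^ n := mul_nonneg hb.le hyn
  have hax := abs_nonneg x
  have hay := abs_nonneg y
  have hxm : x ^ n ≤ m := by simp only [hm]; linarith
  have hym : y ^ n ≤ m := by simp only [hm]; linarith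
  have habsx : |x| ^ n = x ^ n := by
    rw [← abs_pow, abs_of_nonneg hxn]
  have habsy : |y| ^ n = y ^ n := by
    rw [← abs_pow, abs_of_nonneg hyn]
  have h2m : (2:ℤ) ^ n ≤ m := by
    rcases le_max_iff.mp hxy with h | h
    · calc (2:ℤ) ^ n ≤ |x| ^ n := pow_le_pow_left₀ (by norm_num) h n
        _ = x ^ n := habsx
        _ ≤ m := hxm
    · calc (2:ℤ) ^ n ≤ |y| ^ n := pow_le_pow_left₀ (by norm_num) h n
        _ = y ^ n := habsy
        _ ≤ m := hym
  have hm1 : (1:ℤ) ≤ m := le_trans (one_le_two.trans (le_self_pow₀ one_le_two (by omega))) h2m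
  have hxd : |x| ^ d ≤ m := by
    rcases le_or_gt 1 |x| with h1 | h1
    · calc |x| ^ d ≤ |x| ^ n := pow_le_pow_right₀ h1 hdn
        _ = x ^ n := habsx
        _ ≤ m := hxm
    · have hx0 : |x| = 0 := by omega
      rw [hx0, zero_pow (by omega : d ≠ 0)]; linarith
  have hyd : |y| ^ d ≤ m := by
    rcases le_or_gt 1 |y| with h1 | h1
    · calc |y| ^ d ≤ |y| ^ n := pow_le_pow_right₀ h1 hdn
        _ = y ^ n := habsy
        _ ≤ m := hym
    · have hy0 : |y| = 0 := by omega
      rw [hy0, zero_pow (by omega : d ≠ 0)]; linarith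
  have hxle : |x| ≤ m := by
    rcases le_or_gt 1 |x| with h1 | h1
    · exact (le_self_pow₀ h1 (by omega)).trans hxd
    · omega
  have hyle : |y| ≤ m := by
    rcases le_or_gt 1 |y| with h1 | h1
    · exact (le_self_pow₀ h1 (by omega)).trans hyd
    · omega
  exact ⟨hdn, heven, ha, hb, h2m, hxd, hyd, hxle, hyle⟩

private def gmap (q : ℕ × ℤ × ℤ × ℤ × ℤ) : ℕ × (ℤ × ℤ) × ℤ × Bool :=
  (q.1, (q.2.1, q.2.2.1), q.2.2.2.1, decide (0 ≤ q.2.2.2.2))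

private lemma gset_injOn (E : ℕ → Finset (ℤ × ℤ))
    (hpos : ∀ d : ℕ, 3 ≤ d → ∀ p ∈ E d, 0 < p.1 ∧ 0 < p.2)
    (hodd : ∀ d : ℕ, Odd d → E d = ∅)
    {d : ℕ} (hd : 4 ≤ d) {m : ℤ} :
    Set.InjOn gmap (GSet E d m) := by
  rintro ⟨n, a, b, x, y⟩ hq ⟨n', a', b', x', y'⟩ hq' h
  simp only [gmap, Prod.mk.injEq] at h
  obtain ⟨hn, ⟨ha, hb⟩, hx, hy⟩ := h
  subst hn ha hb hx
  obtain ⟨hdn, -, -, hbpos, -, -, -, -, -⟩ := gset_facts E hpos hodd hd hq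
  have heq : m = a * x ^ n + b * y ^ n := hq.2.2.2
  have heq' : m = a * x ^ n + b * y' ^ n := hq'.2.2.2
  have hyy : y ^ n = y' ^ n := by
    have : b * y ^ n = b * y' ^ n := by linarith
    exact mul_left_cancel₀ hbpos.ne' this
  have habs : y.natAbs = y'.natAbs := by
    have h1 : y.natAbs ^ n = y'.natAbs ^ n := by
      have := congrArg Int.natAbs hyy
      simpa [Int.natAbs_pow] using this
    exact Nat.pow_left_injective (by omega : n ≠ 0) h1
  have hsign : (0 ≤ y) ↔ (0 ≤ y') := decide_eq_decide.mp hy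
  have : y = y' := by omega
  simp [this]

private lemma gset_finite (E : ℕ → Finset (ℤ × ℤ))
    (hpos : ∀ d : ℕ, 3 ≤ d → ∀ p ∈ E d, 0 < p.1 ∧ 0 < p.2)
    (hodd : ∀ d : ℕ, Odd d → E d = ∅)
    {d : ℕ} (hd : 4 ≤ d) {m : ℤ} :
    (GSet E d m).Finite := by
  apply Set.Finite.of_finite_image _ (gset_injOn E hpos hodd hd)
  apply Set.Finite.subset
    (((Finset.Icc d m.natAbs).biUnion (fun n => {n} ×ˢ E n ×ˢ Finset.Icc (-m) m ×ˢ
      (Finset.univ : Finset Bool))).finite_toSet)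
  rintro _ ⟨⟨n, a, b, x, y⟩, hq, rfl⟩
  obtain ⟨hdn, -, -, -, h2m, -, -, hxle, hyle⟩ := gset_facts E hpos hodd hd hq
  have hn2 : (n : ℤ) < 2 ^ n := by exact_mod_cast (Nat.lt_two_pow_self (n := n))
  have hnm : (n : ℤ) < m := lt_of_lt_of_le hn2 h2m
  obtain ⟨hx1, hx2⟩ := abs_le.mp hxle
  simp only [Finset.coe_biUnion, Set.mem_iUnion, Finset.mem_coe, Finset.mem_biUnion,
    Finset.mem_Icc, Finset.mem_product, Finset.mem_singleton, gmap]
  exact ⟨n, ⟨hdn, by omega⟩, rfl, hq.2.1, ⟨hx1, hx2⟩, Finset.mem_univ _⟩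

set_option maxHeartbeats 1000000 in
private lemma gset_count (E : ℕ → Finset (ℤ × ℤ))
    (hpos : ∀ d : ℕ, 3 ≤ d → ∀ p ∈ E d, 0 < p.1 ∧ 0 < p.2)
    (hodd : ∀ d : ℕ, Odd d → E d = ∅)
    (hlim : Filter.Tendsto (fun d : ℕ => Real.log ((E d).card + 1) / (d : ℝ))
      Filter.atTop (nhds 0))
    {d : ℕ} (hd : 4 ≤ d) {ε : ℝ} (hε : 0 < ε) :
    ∃ K : ℝ, ∀ m : ℤ, 2 ≤ |m| →
      ((GSet E d m).ncard : ℝ) ≤ K * (|m| : ℝ) ^ ((1 : ℝ) / d + ε) := by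
  have hlog2 : (0:ℝ) < Real.log 2 := Real.log_pos one_lt_two
  set c : ℝ := ε / 4 * Real.log 2 with hc_def
  have hc : 0 < c := by positivity
  obtain ⟨D, hD⟩ := Filter.eventually_atTop.mp (hlim.eventually_lt_const hc)
  set B : ℕ := (Finset.range (D + 1)).sup fun n => (E n).card with hB_def
  have hE : ∀ n : ℕ, 1 ≤ n → ((E n).card : ℝ) ≤ (B : ℝ) + Real.exp (c * n) := by
    intro n hn
    rcases le_or_gt n D with h | h
    · have : (E n).card ≤ B := Finset.le_sup (f := fun n => (E n).card) (Finset.mem_range.mpr (Nat.lt_succ_of_le h))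
      have := (Nat.cast_le (α := ℝ)).mpr this
      nlinarith [Real.exp_pos (c * n)]
    · have h1 := hD n h.le
      have hn0 : (0:ℝ) < n := by exact_mod_cast hn
      rw [div_lt_iff₀ hn0] at h1
      have h2 : ((E n).card : ℝ) + 1 < Real.exp (c * n) := by
        have hp : (0:ℝ) < (E n).card + 1 := by positivity
        exact (Real.log_lt_iff_lt_exp hp).mp h1
      have hB0 : (0:ℝ) ≤ (B:ℝ) := Nat.cast_nonneg B
      linarith
  have hKfac : (0:ℝ) < 1 + 4 / (ε * Real.log 2) :=
    add_pos one_pos (div_pos (by norm_num) (mul_pos hε hlog2))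
  refine ⟨10 * ((B:ℝ) + 1) * (1 + 4 / (ε * Real.log 2)), ?_⟩
  have hK : (0:ℝ) ≤ 10 * ((B:ℝ) + 1) * (1 + 4 / (ε * Real.log 2)) := by positivity
  intro m hm
  rcases lt_or_ge m 2 with hm2 | hm2
  · -- GSet is empty
    have hempty : GSet E d m = ∅ := by
      rw [Set.eq_empty_iff_forall_notMem]
      rintro ⟨n, a, b, x, y⟩ hq
      obtain ⟨hdn, -, -, -, h2m, -⟩ := gset_facts E hpos hodd hd hq
      have h16 : (2:ℤ) ^ 4 ≤ 2 ^ n := pow_le_pow_right₀ one_le_two (by omega)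
      norm_num at h16
      omega
    rw [hempty]
    simp only [Set.ncard_empty, Nat.cast_zero]
    positivity
  · -- main case : m ≥ 2
    have hm0 : (0:ℝ) < (m:ℝ) := by exact_mod_cast (by omega : (0:ℤ) < m)
    rw [abs_of_pos hm0]
    have hm1 : (1:ℝ) ≤ (m:ℝ) := by exact_mod_cast (by omega : (1:ℤ) ≤ m)
    set L : ℕ := Nat.log 2 m.toNat with hL_def
    set R : ℝ := (m:ℝ) ^ ((1:ℝ)/d) with hR_def
    have hR1 : (1:ℝ) ≤ R := Real.one_le_rpow hm1 (by positivity)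
    set X : ℤ := ⌈R⌉ with hX_def
    have hX1 : (1:ℤ) ≤ X := by
      calc (1:ℤ) = ⌈(1:ℝ)⌉ := by simp
        _ ≤ ⌈R⌉ := Int.ceil_le_ceil hR1
    set F : Finset (ℕ × (ℤ × ℤ) × ℤ × Bool) :=
      (Finset.Icc d L).biUnion (fun n => {n} ×ˢ E n ×ˢ Finset.Icc (-X) X ×ˢ
        (Finset.univ : Finset Bool)) with hF_def
    -- the image of GSet under gmap is contained in F
    have hsub : gmap '' GSet E d m ⊆ ↑F := by
      rintro _ ⟨⟨n, a, b, x, y⟩, hq, rfl⟩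
      obtain ⟨hdn, -, -, -, h2m, hxd, -, -, -⟩ := gset_facts E hpos hodd hd hq
      have hnL : n ≤ L := by
        have h1 : (2:ℤ) ^ n ≤ m.toNat := by rwa [Int.toNat_of_nonneg (by omega)]
        have h2 : 2 ^ n ≤ m.toNat := by exact_mod_cast h1
        exact (Nat.le_log_iff_pow_le one_lt_two (by omega)).mpr h2
      have hxX : |x| ≤ X := by
        have h1 : ((|x|:ℝ)) ^ (d:ℕ) ≤ (m:ℝ) := by exact_mod_cast hxd
        have h2 : (|x|:ℝ) ≤ R := by
          have hd0 : (d:ℝ) ≠ 0 := by positivity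
          have h3 : ((|x|:ℝ) ^ (d:ℕ)) ^ ((1:ℝ)/d) ≤ (m:ℝ) ^ ((1:ℝ)/d) :=
            Real.rpow_le_rpow (by positivity) h1 (by positivity)
          rwa [← Real.rpow_natCast (|x|:ℝ) d, ← Real.rpow_mul (by positivity),
            mul_one_div_cancel hd0, Real.rpow_one] at h3
        have h4 : (|x|:ℝ) ≤ (X:ℝ) := h2.trans (Int.le_ceil R)
        exact_mod_cast h4
      obtain ⟨hx1, hx2⟩ := abs_le.mp hxX
      simp only [hF_def, Finset.coe_biUnion, Set.mem_iUnion, Finset.mem_coe,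
        Finset.mem_biUnion, Finset.mem_Icc, Finset.mem_product, Finset.mem_singleton, gmap]
      exact ⟨n, ⟨hdn, hnL⟩, rfl, hq.2.1, ⟨hx1, hx2⟩, Finset.mem_univ _⟩
    -- cardinality bound
    have hstep1 : ((GSet E d m).ncard : ℝ) ≤ (F.card : ℝ) := by
      have e1 : (GSet E d m).ncard = (gmap '' GSet E d m).ncard :=
        (Set.ncard_image_of_injOn (gset_injOn E hpos hodd hd)).symm
      have e2 : (gmap '' GSet E d m).ncard ≤ F.card := by
        rw [← Set.ncard_coe_finset]
        exact Set.ncard_le_ncard hsub F.finite_toSet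
      exact_mod_cast e1 ▸ Nat.cast_le.mpr e2
    set Icard : ℕ := (Finset.Icc (-X) X).card with hIc_def
    have hIcard : (Icard : ℝ) ≤ 5 * R := by
      have h1 : (Icard : ℤ) = 2 * X + 1 := by
        rw [hIc_def, Int.card_Icc]
        omega
      have h2 : (Icard : ℝ) = 2 * (X:ℝ) + 1 := by exact_mod_cast h1
      have h3 : (X:ℝ) < R + 1 := Int.ceil_lt_add_one R
      linarith
    have hstep2 : (F.card : ℝ) ≤ ((L:ℝ) + 1) * (((B:ℝ) + Real.exp (c * L)) * (5 * R * 2)) := by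
      set T : ℝ := ((B:ℝ) + Real.exp (c * L)) * (5 * R * 2) with hT_def
      have hT0 : 0 ≤ T := by positivity
      have h1 : F.card ≤ ∑ n ∈ Finset.Icc d L, ((E n).card * (Icard * 2)) := by
        refine (Finset.card_biUnion_le).trans (Finset.sum_le_sum ?_)
        intro n _
        have he : ({n} ×ˢ E n ×ˢ Finset.Icc (-X) X ×ˢ (Finset.univ : Finset Bool)).card
            = (E n).card * (Icard * 2) := by
          simp [Finset.card_product, Finset.card_univ, hIc_def, mul_assoc]
        exact le_of_eq he
      have hbound : ∀ n ∈ Finset.Icc d L, ((E n).card : ℝ) * ((Icard:ℝ) * 2) ≤ T := by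
        intro n hn
        obtain ⟨hn1, hn2⟩ := Finset.mem_Icc.mp hn
        have hcard : ((E n).card : ℝ) ≤ (B:ℝ) + Real.exp (c * L) := by
          refine (hE n (by omega)).trans ?_
          have hnl : (n:ℝ) ≤ (L:ℝ) := by exact_mod_cast hn2
          have : Real.exp (c * n) ≤ Real.exp (c * L) := by
            apply Real.exp_le_exp.mpr
            nlinarith
          linarith
        have hI2 : (Icard:ℝ) * 2 ≤ 5 * R * 2 := by linarith
        have hIc0 : (0:ℝ) ≤ (Icard:ℝ) * 2 := mul_nonneg (Nat.cast_nonneg _) (by norm_num)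
        have hBe0 : (0:ℝ) ≤ (B:ℝ) + Real.exp (c * L) :=
          add_nonneg (Nat.cast_nonneg _) (Real.exp_pos _).le
        exact mul_le_mul hcard hI2 hIc0 hBe0
      have h2 : ∑ n ∈ Finset.Icc d L, ((E n).card : ℝ) * ((Icard:ℝ) * 2) ≤
          ((Finset.Icc d L).card : ℝ) * T := by
        simpa [nsmul_eq_mul] using Finset.sum_le_card_nsmul _ _ _ hbound
      have h3 : ((Finset.Icc d L).card : ℝ) ≤ (L:ℝ) + 1 := by
        have hcc : (Finset.Icc d L).card ≤ L + 1 := by rw [Nat.card_Icc]; omega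
        exact_mod_cast hcc
      calc (F.card : ℝ)
          ≤ ((∑ n ∈ Finset.Icc d L, ((E n).card * (Icard * 2)) : ℕ) : ℝ) := by
            exact_mod_cast h1
        _ = ∑ n ∈ Finset.Icc d L, ((E n).card : ℝ) * ((Icard:ℝ) * 2) := by
            push_cast
            exact Finset.sum_congr rfl (fun _ _ => by ring)
        _ ≤ ((Finset.Icc d L).card : ℝ) * T := h2
        _ ≤ ((L:ℝ) + 1) * T := mul_le_mul_of_nonneg_right h3 hT0
    -- analytic bounds
    have h2L : ((2:ℝ) ^ L) ≤ (m:ℝ) := by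
      have h1 : (2:ℕ) ^ L ≤ m.toNat := Nat.pow_log_le_self 2 (by omega)
      calc ((2:ℝ)^L) = (((2:ℕ)^L : ℕ) : ℝ) := by push_cast; ring
        _ ≤ (m.toNat : ℝ) := by exact_mod_cast h1
        _ = (m:ℝ) := by
            have hh : ((m.toNat : ℤ) : ℝ) = (m:ℝ) := by
              rw [Int.toNat_of_nonneg (by omega : (0:ℤ) ≤ m)]
            exact_mod_cast hh
    have hexp : Real.exp (c * L) ≤ (m:ℝ) ^ (ε/4) := by
      have e1 : Real.exp (c * L) = ((2:ℝ) ^ (L:ℕ)) ^ (ε/4) := by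
        rw [← Real.rpow_natCast (2:ℝ) L, ← Real.rpow_mul (by norm_num)]
        rw [Real.rpow_def_of_pos (by norm_num : (0:ℝ) < 2)]
        ring_nf
        congr 1; rw [hc_def]; ring
      rw [e1]
      exact Real.rpow_le_rpow (by positivity) h2L (by positivity)
    have hL : ((L:ℝ) + 1) ≤ (1 + 4 / (ε * Real.log 2)) * (m:ℝ) ^ (ε/4) := by
      have h1 : (L:ℝ) * Real.log 2 ≤ Real.log m := by
        have := Real.log_le_log (by positivity) h2L
        rw [Real.log_pow] at this
        linarith
      have h2 : Real.log m ≤ (m:ℝ) ^ (ε/4) / (ε/4) :=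
        Real.log_le_rpow_div hm0.le (by positivity)
      have h3 : (1:ℝ) ≤ (m:ℝ) ^ (ε/4) := Real.one_le_rpow hm1 (by positivity)
      have h4 : (L:ℝ) ≤ (4 / (ε * Real.log 2)) * (m:ℝ) ^ (ε/4) := by
        rw [div_mul_eq_mul_div, le_div_iff₀ (mul_pos hε hlog2)]
        calc (L:ℝ) * (ε * Real.log 2) = ((L:ℝ) * Real.log 2) * ε := by ring
          _ ≤ Real.log m * ε := by nlinarith
          _ ≤ ((m:ℝ) ^ (ε/4) / (ε/4)) * ε := by nlinarith [Real.rpow_nonneg hm0.le (ε/4)]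
          _ = 4 * (m:ℝ) ^ (ε/4) := by field_simp
      linarith
    have hBexp : (B:ℝ) + Real.exp (c * L) ≤ ((B:ℝ) + 1) * (m:ℝ) ^ (ε/4) := by
      have h3 : (1:ℝ) ≤ (m:ℝ) ^ (ε/4) := Real.one_le_rpow hm1 (by positivity)
      have hB0 : (0:ℝ) ≤ (B:ℝ) := Nat.cast_nonneg B
      nlinarith
    -- final chain
    have hfinal : ((L:ℝ) + 1) * (((B:ℝ) + Real.exp (c * L)) * (5 * R * 2)) ≤
        10 * ((B:ℝ) + 1) * (1 + 4 / (ε * Real.log 2)) * (m:ℝ) ^ ((1:ℝ)/d + ε) := by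
      have hrw : (m:ℝ) ^ (ε/4) * ((m:ℝ) ^ (ε/4) * (m:ℝ) ^ ((1:ℝ)/d)) =
          (m:ℝ) ^ ((1:ℝ)/d + ε/2) := by
        rw [← Real.rpow_add hm0, ← Real.rpow_add hm0]
        ring_nf
      have hmono : (m:ℝ) ^ ((1:ℝ)/d + ε/2) ≤ (m:ℝ) ^ ((1:ℝ)/d + ε) :=
        Real.rpow_le_rpow_of_exponent_le hm1 (by linarith)
      have hL0 : (0:ℝ) ≤ (L:ℝ) + 1 := by positivity
      have hBe0 : (0:ℝ) ≤ (B:ℝ) + Real.exp (c * L) := by positivity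
      calc ((L:ℝ) + 1) * (((B:ℝ) + Real.exp (c * L)) * (5 * R * 2))
          ≤ ((1 + 4 / (ε * Real.log 2)) * (m:ℝ) ^ (ε/4)) *
            ((((B:ℝ) + 1) * (m:ℝ) ^ (ε/4)) * (5 * R * 2)) := by
            apply mul_le_mul hL ?_ (by positivity) (by positivity)
            apply mul_le_mul_of_nonneg_right hBexp
            positivity
        _ = 10 * ((B:ℝ) + 1) * (1 + 4 / (ε * Real.log 2)) *
            ((m:ℝ) ^ (ε/4) * ((m:ℝ) ^ (ε/4) * (m:ℝ) ^ ((1:ℝ)/d))) := by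
            rw [hR_def]; ring
        _ = 10 * ((B:ℝ) + 1) * (1 + 4 / (ε * Real.log 2)) * (m:ℝ) ^ ((1:ℝ)/d + ε/2) := by
            rw [hrw]
        _ ≤ _ := by
            apply mul_le_mul_of_nonneg_left hmono
            positivity
    linarith

/-- Theorem 1.1 (a) (positive definite case): under conditions (C1), (C2), positivity of the
coefficients, `𝓔_d = ∅` for odd `d` and `(1/d) log(#𝓔_d + 1) → 0`, the set `𝓖_{≥ d}(m)` is
finite for `m ∉ {0,1}` and `d ≥ 4`, and `#𝓖_{≥ d}(m) = O(|m|^{1/d + ε})`. -/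
theorem positive_definite_case_finiteness_and_count
    (E : ℕ → Finset (ℤ × ℤ))
    (hpos : ∀ d : ℕ, 3 ≤ d → ∀ p ∈ E d, 0 < p.1 ∧ 0 < p.2)
    (hodd : ∀ d : ℕ, Odd d → E d = ∅)
    (hC1 : ∀ d : ℕ, 3 ≤ d → CondC1 d (E d))
    (hC2 : ∀ d : ℕ, 3 ≤ d → CondC2 d (E d))
    (hlim : Filter.Tendsto (fun d : ℕ => Real.log ((E d).card + 1) / (d : ℝ))
      Filter.atTop (nhds 0)) :
    (∀ m : ℤ, m ≠ 0 → m ≠ 1 → ∀ d : ℕ, 4 ≤ d → (GSet E d m).Finite) ∧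
    (∀ d : ℕ, 4 ≤ d → ∀ ε : ℝ, 0 < ε → ∃ K : ℝ, ∀ m : ℤ, 2 ≤ |m| →
      ((GSet E d m).ncard : ℝ) ≤ K * (|m| : ℝ) ^ ((1 : ℝ) / d + ε)) := by
  exact ⟨fun m _ _ d hd => gset_finite E hpos hodd hd,
    fun d hd ε hε => gset_count E hpos hodd hlim hd hε⟩
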